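/- Let P be a path graph on m vertices colored with n colors such that every pair of distinct colors appears on some edge. Then m ≥ n(n-1)/2 + 1 if n is odd, and m ≥ n²/2 if n is even. -/

import Mathlib

open Finset

private def pdeg (n : ℕ) (s : ℕ → Fin n) (M : ℕ) (c : Fin n) : ℕ :=
  ((range M).filter (fun i => s i ≠ s (i+1) ∧ (s i = c ∨ s (i+1) = c))).card

private lemma tele (n : ℕ) (s : ℕ → Fin n) (c : Fin n) : ∀ M : ℕ,
    ((range M).filter (fun i => s i = c ∧ s (i+1) ≠ c)).card
      + (if s M = c then 1 else 0)
    = ((range M).filter (fun i => s i ≠ c ∧ s (i+1) = c)).card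
      + (if s 0 = c then 1 else 0) := by
  intro M
  induction M with
  | zero => simp
  | succ M ih =>
    rw [range_add_one, filter_insert, filter_insert]
    by_cases h1 : s M = c <;> by_cases h2 : s (M+1) = c <;>
      simp [h1, h2, card_insert_of_notMem, notMem_range_self, mem_filter] at ih ⊢ <;>
      omega

private lemma pdeg_eq (n : ℕ) (s : ℕ → Fin n) (M : ℕ) (c : Fin n) :
    pdeg n s M c = ((range M).filter (fun i => s i = c ∧ s (i+1) ≠ c)).card
      + ((range M).filter (fun i => s i ≠ c ∧ s (i+1) = c)).card := by
  unfold pdeg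
  rw [← card_union_of_disjoint]
  · congr 1
    ext i
    simp only [mem_filter, mem_union]
    by_cases h1 : s i = c <;> by_cases h2 : s (i+1) = c <;>
      simp [h1, h2] <;> tauto
  · rw [Finset.disjoint_left]
    intro i hi hj
    simp only [mem_filter] at hi hj
    exact hj.2.1 hi.2.1

private lemma pdeg_sum (n : ℕ) (s : ℕ → Fin n) (M : ℕ) :
    ∑ c : Fin n, pdeg n s M c ≤ 2 * M := by
  have h : ∑ c : Fin n, pdeg n s M c
      = ∑ i ∈ range M, ((univ : Finset (Fin n)).filter
          (fun c => s i ≠ s (i+1) ∧ (s i = c ∨ s (i+1) = c))).card := by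
    simp only [pdeg, card_filter]
    rw [Finset.sum_comm]
  rw [h]
  calc ∑ i ∈ range M, ((univ : Finset (Fin n)).filter
          (fun c => s i ≠ s (i+1) ∧ (s i = c ∨ s (i+1) = c))).card
      ≤ ∑ _i ∈ range M, 2 := by
        refine sum_le_sum fun i _ => ?_
        calc ((univ : Finset (Fin n)).filter
              (fun c => s i ≠ s (i+1) ∧ (s i = c ∨ s (i+1) = c))).card
            ≤ ({s i, s (i+1)} : Finset (Fin n)).card := by
              refine card_le_card ?_
              intro c hc
              simp only [mem_filter] at hc
              simp only [mem_insert, mem_singleton]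
              rcases hc.2.2 with h | h
              · exact Or.inl h.symm
              · exact Or.inr h.symm
          _ ≤ 2 := card_insert_le _ _ |>.trans (by simp)
    _ = 2 * M := by simp [mul_comm]

/-- A path on `m` vertices colored with `n` colors covering every pair of distinct
colors on some edge satisfies `m ≥ n(n-1)/2 + 1` when `n` is odd, and `m ≥ n²/2`
when `n` is even. -/
theorem stmt_8 (n m : ℕ) (hn : 2 ≤ n) (s : ℕ → Fin n)
    (hcov : ∀ a b : Fin n, a ≠ b → ∃ i : ℕ, i + 1 < m ∧
      ((s i = a ∧ s (i + 1) = b) ∨ (s i = b ∧ s (i + 1) = a))) :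
    (Odd n → n * (n - 1) / 2 + 1 ≤ m) ∧ (Even n → n ^ 2 / 2 ≤ m) := by
  obtain ⟨j, hj, -⟩ := hcov ⟨0, by omega⟩ ⟨1, by omega⟩ (by simp)
  have hm : 2 ≤ m := by omega
  set M := m - 1 with hM
  have hdeg : ∀ c : Fin n, n - 1 ≤ pdeg n s M c := by
    intro c
    have hsub : univ.erase c ⊆ (((range M).filter
        (fun i => s i ≠ s (i+1) ∧ (s i = c ∨ s (i+1) = c))).image
        (fun i => if s i = c then s (i+1) else s i)) := by
      intro d hd
      have hdc : d ≠ c := (mem_erase.mp hd).1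
      obtain ⟨i, hi, hor⟩ := hcov c d (Ne.symm hdc)
      rw [mem_image]
      refine ⟨i, ?_, ?_⟩
      · rw [mem_filter, mem_range]
        rcases hor with ⟨h1, h2⟩ | ⟨h1, h2⟩
        · exact ⟨by omega, by rw [h1, h2]; exact fun h => hdc h.symm, Or.inl h1⟩
        · exact ⟨by omega, by rw [h1, h2]; exact hdc, Or.inr h2⟩
      · rcases hor with ⟨h1, h2⟩ | ⟨h1, h2⟩
        · simp [h1, h2]
        · simp [h1, hdc]
    calc n - 1 = (univ.erase c).card := by
          rw [card_erase_of_mem (mem_univ c), card_univ, Fintype.card_fin]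
      _ ≤ _ := card_le_card hsub
      _ ≤ pdeg n s M c := card_image_le
  have hpar : ∀ c : Fin n, c ≠ s 0 → c ≠ s M → Even (pdeg n s M c) := by
    intro c h0 hMc
    have ht := tele n s c M
    rw [if_neg (fun h => hMc h.symm), if_neg (fun h => h0 h.symm)] at ht
    rw [pdeg_eq]
    exact ⟨((range M).filter (fun i => s i ≠ c ∧ s (i+1) = c)).card, by omega⟩
  have hsum := pdeg_sum n s M
  constructor
  · intro _
    have h1 : n * (n - 1) ≤ 2 * M := by
      calc n * (n - 1) = ∑ _c : Fin n, (n - 1) := by simp [mul_comm]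
        _ ≤ ∑ c : Fin n, pdeg n s M c := sum_le_sum fun c _ => hdeg c
        _ ≤ 2 * M := hsum
    generalize hk : n * (n - 1) = K at h1 ⊢
    omega
  · intro hev
    have hodd : Odd (n - 1) := Nat.Even.sub_odd (by omega) hev odd_one
    have hdeg2 : ∀ c : Fin n,
        n ≤ pdeg n s M c + (if c = s 0 ∨ c = s M then 1 else 0) := by
      intro c
      by_cases h : c = s 0 ∨ c = s M
      · rw [if_pos h]; have := hdeg c; omega
      · push_neg at h
        rw [if_neg (by push_neg; exact h)]
        obtain ⟨k, hk⟩ := hpar c h.1 h.2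
        have h1 := hdeg c
        obtain ⟨l, hl⟩ := hodd
        omega
    have h2 : n * n ≤ 2 * M + 2 := by
      calc n * n = ∑ _c : Fin n, n := by simp [mul_comm]
        _ ≤ ∑ c : Fin n, (pdeg n s M c + (if c = s 0 ∨ c = s M then 1 else 0)) :=
            sum_le_sum fun c _ => hdeg2 c
        _ = (∑ c : Fin n, pdeg n s M c)
            + ∑ c : Fin n, (if c = s 0 ∨ c = s M then 1 else 0) := sum_add_distrib
        _ ≤ 2 * M + 2 := by
            refine Nat.add_le_add hsum ?_
            rw [Finset.sum_boole]
            push_cast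
            calc ((univ : Finset (Fin n)).filter (fun c => c = s 0 ∨ c = s M)).card
                ≤ ({s 0, s M} : Finset (Fin n)).card := by
                  refine card_le_card fun c hc => ?_
                  simp only [mem_filter] at hc
                  simpa using hc.2
              _ ≤ 2 := card_insert_le _ _ |>.trans (by simp)
    have h3 : n ^ 2 ≤ 2 * m := by rw [pow_two]; omega
    generalize hk : n ^ 2 = K at h3 ⊢
    omega
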